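/- Let m, n be positive integers with n dividing m, set r = m/n and ε = exp(2πi/m), and let k₁, k₂ be integers with 0 ≤ k₁, k₂ ≤ r−1 satisfying 1 + k₁ + k₁² ≡ 0 (mod r), 1 + k₂ + k₂² ≡ 0 (mod r) and 1 + k₁ + k₂ = r. Then conjugation by B maps C_{m,n}^{(k₁)} onto C_{m,n}^{(k₂)}, i.e. B · C_{m,n}^{(k₁)} · B⁻¹ = C_{m,n}^{(k₂)}; in particular the map M ↦ B M B⁻¹ is a group isomorphism from C_{m,n}^{(k₁)} onto C_{m,n}^{(k₂)}. -/

import Mathlib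

open Matrix Complex

noncomputable section

/-- The group `SU(3)`: 3×3 complex unitary matrices of determinant 1. -/
abbrev SU3 : Type := ↥(Matrix.specialUnitaryGroup (Fin 3) ℂ)

noncomputable instance : Group SU3 :=
  { (inferInstance : Monoid SU3) with
    inv := fun A => ⟨star A.val,
      ⟨Unitary.star_mem A.2.1, by
        have h2 : A.val.det = 1 := A.2.2
        show Matrix.detMonoidHom (star A.val) = 1
        show (star A.val).det = 1
        rw [Matrix.star_eq_conjTranspose, Matrix.det_conjTranspose, h2, star_one]⟩⟩
    inv_mul_cancel := fun A => Subtype.ext A.2.1.1 }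

/-- The matrix `E` with rows (0,1,0), (0,0,1), (1,0,0). -/
def EM : Matrix (Fin 3) (Fin 3) ℂ := !![0, 1, 0; 0, 0, 1; 1, 0, 0]

/-- The matrix `B` with rows (-1,0,0), (0,0,-1), (0,-1,0). -/
def BM : Matrix (Fin 3) (Fin 3) ℂ := !![-1, 0, 0; 0, 0, -1; 0, -1, 0]

/-- `ε = exp(2πi/m)`. -/
def eps (m : ℕ) : ℂ := Complex.exp (2 * Real.pi * Complex.I / m)

/-- The diagonal matrix `F = diag(ε, ε^k, ε^(-k-1))` with `ε = exp(2πi/m)`. -/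
def FM (m : ℕ) (k : ℤ) : Matrix (Fin 3) (Fin 3) ℂ :=
  Matrix.diagonal ![eps m, eps m ^ k, eps m ^ (-k - 1)]

/-- The diagonal matrix `G = diag(1, ε^(-r), ε^r)` with `ε = exp(2πi/m)`. -/
def GM (m r : ℕ) : Matrix (Fin 3) (Fin 3) ℂ :=
  Matrix.diagonal ![1, eps m ^ (-(r : ℤ)), eps m ^ (r : ℤ)]

/- ### Auxiliary lemmas -/

lemma aux_eps_ne (m : ℕ) : eps m ≠ 0 := Complex.exp_ne_zero _

lemma aux_diag3 (a b c : ℂ) : Matrix.diagonal ![a,b,c] = !![a,0,0;0,b,0;0,0,c] := by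
  ext i j; fin_cases i <;> fin_cases j <;>
    simp [Matrix.diagonal, Matrix.vecHead, Matrix.vecTail]

lemma aux_star_BM : star BM = BM := by
  rw [Matrix.star_eq_conjTranspose, Matrix.eta_fin_three (BM)ᴴ]
  simp [BM, Matrix.vecHead, Matrix.vecTail]

lemma aux_BEB : BM * EM * BM = EM * EM := by
  simp [BM, EM, Matrix.mul_fin_three]

lemma aux_E3 : EM * EM * EM = 1 := by
  simp [EM, Matrix.mul_fin_three, Matrix.one_fin_three]

lemma aux_conj_diag (a b c : ℂ) :
    BM * Matrix.diagonal ![a,b,c] * BM = Matrix.diagonal ![a,c,b] := by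
  simp [BM, aux_diag3, Matrix.mul_fin_three]

lemma aux_BFB (m r : ℕ) (k₁ k₂ : ℤ) (hsum : 1 + k₁ + k₂ = (r : ℤ)) :
    BM * FM m k₁ * BM = FM m k₂ * GM m r := by
  rw [FM, aux_conj_diag, FM, GM, Matrix.diagonal_mul_diagonal]
  refine congrArg Matrix.diagonal ?_
  have h := aux_eps_ne m
  have E1 : eps m ^ (-k₁-1) = eps m ^ k₂ * (eps m ^ r)⁻¹ := by
    rw [← zpow_natCast (eps m) r, ← _root_.zpow_neg, ← zpow_add₀ h]; congr 1; omega
  have E2 : eps m ^ k₁ = eps m ^ (-k₂-1) * eps m ^ r := by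
    rw [← zpow_natCast (eps m) r, ← zpow_add₀ h]; congr 1; omega
  funext i; fin_cases i <;> simp [E1, E2]

lemma aux_GBGB (m r : ℕ) : BM * GM m r * BM * GM m r = 1 := by
  rw [GM, aux_conj_diag, Matrix.diagonal_mul_diagonal,
    show (1 : Matrix (Fin 3) (Fin 3) ℂ) = Matrix.diagonal ![1,1,1] by
      simp [aux_diag3, Matrix.one_fin_three]]
  refine congrArg Matrix.diagonal ?_
  have h := aux_eps_ne m
  funext i; fin_cases i <;> simp [h]

theorem statement15 (m n : ℕ) (hm : 0 < m) (hn : 0 < n) (hnm : n ∣ m)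
    (k₁ k₂ : ℤ)
    (hk₁0 : 0 ≤ k₁) (hk₁r : k₁ ≤ ((m / n : ℕ) : ℤ) - 1)
    (hk₂0 : 0 ≤ k₂) (hk₂r : k₂ ≤ ((m / n : ℕ) : ℤ) - 1)
    (hc₁ : ((m / n : ℕ) : ℤ) ∣ 1 + k₁ + k₁ ^ 2)
    (hc₂ : ((m / n : ℕ) : ℤ) ∣ 1 + k₂ + k₂ ^ 2)
    (hsum : 1 + k₁ + k₂ = ((m / n : ℕ) : ℤ))
    (E B F₁ F₂ G : SU3)
    (hE : (E : Matrix (Fin 3) (Fin 3) ℂ) = EM)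
    (hB : (B : Matrix (Fin 3) (Fin 3) ℂ) = BM)
    (hF₁ : (F₁ : Matrix (Fin 3) (Fin 3) ℂ) = FM m k₁)
    (hF₂ : (F₂ : Matrix (Fin 3) (Fin 3) ℂ) = FM m k₂)
    (hG : (G : Matrix (Fin 3) (Fin 3) ℂ) = GM m (m / n)) :
    (fun x => B * x * B⁻¹) '' (Subgroup.closure ({E, F₁, G} : Set SU3) : Set SU3)
      = (Subgroup.closure ({E, F₂, G} : Set SU3) : Set SU3) ∧
    Nonempty ((Subgroup.closure ({E, F₁, G} : Set SU3)) ≃*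
      (Subgroup.closure ({E, F₂, G} : Set SU3))) := by
  have hBinv : ((B⁻¹ : SU3) : Matrix (Fin 3) (Fin 3) ℂ) = BM := by
    show star (B : Matrix (Fin 3) (Fin 3) ℂ) = BM
    rw [hB, aux_star_BM]
  have cE : B * E * B⁻¹ = E * E := by
    apply Subtype.ext
    show B.val * E.val * (B⁻¹).val = E.val * E.val
    rw [hB, hE, hBinv, aux_BEB]
  have cF : B * F₁ * B⁻¹ = F₂ * G := by
    apply Subtype.ext
    show B.val * F₁.val * (B⁻¹).val = F₂.val * G.val
    rw [hB, hF₁, hBinv, hF₂, hG, aux_BFB m (m/n) k₁ k₂ hsum]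
  have cG : B * G * B⁻¹ = G⁻¹ := by
    apply eq_inv_of_mul_eq_one_left
    apply Subtype.ext
    show B.val * G.val * (B⁻¹).val * G.val = (1 : SU3).val
    rw [hB, hG, hBinv, aux_GBGB]; rfl
  have hE3 : E * E * E = 1 := by
    apply Subtype.ext
    show E.val * E.val * E.val = (1 : SU3).val
    rw [hE, aux_E3]; rfl
  set φ : SU3 ≃* SU3 := MulAut.conj B with hφ
  have hφ_apply : ∀ x : SU3, φ.toMonoidHom x = B * x * B⁻¹ := fun x => rfl
  set H₁ := Subgroup.closure ({E, F₁, G} : Set SU3) with hH₁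
  set H₂ := Subgroup.closure ({E, F₂, G} : Set SU3) with hH₂
  have hmap : H₁.map φ.toMonoidHom = H₂ := by
    rw [hH₁, MonoidHom.map_closure, Set.image_insert_eq, Set.image_insert_eq,
      Set.image_singleton, hφ_apply, hφ_apply, hφ_apply, cE, cF, cG]
    apply le_antisymm
    · rw [Subgroup.closure_le, Set.insert_subset_iff, Set.insert_subset_iff,
        Set.singleton_subset_iff]
      refine ⟨mul_mem ?_ ?_, mul_mem ?_ ?_, inv_mem ?_⟩ <;>
        exact Subgroup.subset_closure (by simp)
    · rw [hH₂, Subgroup.closure_le, Set.insert_subset_iff, Set.insert_subset_iff,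
        Set.singleton_subset_iff]
      have memEE : E * E ∈ Subgroup.closure ({E * E, F₂ * G, G⁻¹} : Set SU3) :=
        Subgroup.subset_closure (by simp)
      have memFG : F₂ * G ∈ Subgroup.closure ({E * E, F₂ * G, G⁻¹} : Set SU3) :=
        Subgroup.subset_closure (by simp)
      have memGi : G⁻¹ ∈ Subgroup.closure ({E * E, F₂ * G, G⁻¹} : Set SU3) :=
        Subgroup.subset_closure (by simp)
      have hGmem : G ∈ Subgroup.closure ({E * E, F₂ * G, G⁻¹} : Set SU3) := by
        have := inv_mem memGi; rwa [inv_inv] at this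
      refine ⟨?_, ?_, hGmem⟩
      · have hEeq : E * E * (E * E) = E := by
          have h4 : E * E * (E * E) = E * (E * E * E) := by group
          rw [h4, hE3, mul_one]
        have := mul_mem memEE memEE; rwa [hEeq] at this
      · have hFeq : F₂ * G * G⁻¹ = F₂ := by group
        have := mul_mem memFG memGi; rwa [hFeq] at this
  constructor
  · have h1 : (fun x => B * x * B⁻¹) '' (H₁ : Set SU3)
        = ⇑φ.toMonoidHom '' (H₁ : Set SU3) := rfl
    rw [h1, ← Subgroup.coe_map, hmap]
  · exact ⟨(φ.subgroupMap H₁).trans (MulEquiv.subgroupCongr hmap)⟩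

end
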